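/- Let S = {S_1,...,S_t} be an (A,Ψ)-frame over [n] (with parameters r ≥ 1, δ ≥ 2, partition {A_1,...,A_α, B} of [t], and Ψ = {ξ_1,...,ξ_α} ⊆ [n]), and let k ≥ 1 with r ≤ k. Suppose t ≥ ⌈k/r⌉ and that for every subset J ⊆ [t] with |J| = ⌈k/r⌉ one has |∪_{i∈J} S_i| ≥ k + ⌈k/r⌉(δ−1). Then: (1) every subset T ⊆ [n] with |T| ≥ k + (⌈k/r⌉−1)(δ−1) contains a subset S that is an (S,r,k)-core; (2) for every i ∈ [t] and every r-element subset I ⊆ S_i, there exists an (S,r,k)-core S with I ⊆ S. -/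

import Mathlib

/-- `S = {S_1,…,S_t}` is an `(A,Ψ)`-frame over `[n]`, with blocks `A_1,…,A_a, B`
partitioning `[t]` and `Ψ = {ξ_1,…,ξ_a} ⊆ [n]`. -/
def IsFrame {n t a : ℕ} (r δ : ℕ) (S : Fin t → Finset (Fin n))
    (A : Fin a → Finset (Fin t)) (B : Finset (Fin t)) (ξ : Fin a → Fin n) : Prop :=
  (∀ i : Fin t, (S i).card = r + δ - 1) ∧
  -- {A_1,…,A_a, B} is a partition of [t]
  (∀ j₁ j₂ : Fin a, j₁ ≠ j₂ → Disjoint (A j₁) (A j₂)) ∧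
  (∀ j : Fin a, Disjoint (A j) B) ∧
  ((Finset.univ.biUnion A) ∪ B = Finset.univ) ∧
  -- frame condition (1): ∩_{ℓ∈A_j} S_ℓ = {ξ_j}, and the S_i \ {ξ_j}, i ∈ A_j, are disjoint
  (∀ j : Fin a, ∀ x : Fin n, (∀ ℓ ∈ A j, x ∈ S ℓ) ↔ x = ξ j) ∧
  (∀ j : Fin a, ∀ i₁ ∈ A j, ∀ i₂ ∈ A j, i₁ ≠ i₂ →
    Disjoint (S i₁ \ {ξ j}) (S i₂ \ {ξ j})) ∧
  -- frame condition (2): the ∪_{ℓ∈A_j} S_ℓ together with the S_j, j ∈ B, partition [n]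
  (∀ j₁ j₂ : Fin a, j₁ ≠ j₂ → Disjoint ((A j₁).biUnion S) ((A j₂).biUnion S)) ∧
  (∀ j : Fin a, ∀ i ∈ B, Disjoint ((A j).biUnion S) (S i)) ∧
  (∀ i₁ ∈ B, ∀ i₂ ∈ B, i₁ ≠ i₂ → Disjoint (S i₁) (S i₂)) ∧
  (Finset.univ.biUnion S = Finset.univ)

/-- `T` is an `(S,r)`-core. -/
def IsCore {n t a : ℕ} (S : Fin t → Finset (Fin n))
    (A : Fin a → Finset (Fin t)) (B : Finset (Fin t)) (ξ : Fin a → Fin n)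
    (r : ℕ) (T : Finset (Fin n)) : Prop :=
  (∀ j : Fin a, ξ j ∈ T → ∀ i ∈ A j, (T ∩ S i).card ≤ r) ∧
  (∀ j : Fin a, ξ j ∉ T → ∃ ij ∈ A j, (T ∩ S ij).card ≤ r ∧
    ∀ i ∈ A j, i ≠ ij → (T ∩ S i).card ≤ r - 1) ∧
  (∀ i ∈ B, (T ∩ S i).card ≤ r)


open Finset

section Core14

variable {n t a r δ : ℕ} {S : Fin t → Finset (Fin n)}
  {A : Fin a → Finset (Fin t)} {B : Finset (Fin t)} {ξ : Fin a → Fin n}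

/-- the reduced sets: `S i` minus all the `ξ j`. -/
def Sp (S : Fin t → Finset (Fin n)) (ξ : Fin a → Fin n) (i : Fin t) : Finset (Fin n) :=
  S i \ Finset.image ξ Finset.univ

noncomputable def trunc {α : Type*} (s : Finset α) (c : ℕ) : Finset α :=
  (Finset.exists_subset_card_eq (Nat.min_le_left s.card c)).choose

lemma trunc_subset {α : Type*} (s : Finset α) (c : ℕ) : trunc s c ⊆ s :=
  (Finset.exists_subset_card_eq (Nat.min_le_left s.card c)).choose_spec.1

lemma trunc_card {α : Type*} (s : Finset α) (c : ℕ) : (trunc s c).card = min s.card c :=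
  (Finset.exists_subset_card_eq (Nat.min_le_left s.card c)).choose_spec.2

lemma frame_ximem (hf : IsFrame r δ S A B ξ) {j : Fin a} {ℓ : Fin t} (hℓ : ℓ ∈ A j) :
    ξ j ∈ S ℓ :=
  ((hf.2.2.2.2.1 j (ξ j)).mpr rfl) ℓ hℓ

lemma frame_mem_B_or (hf : IsFrame r δ S A B ξ) (i : Fin t) : i ∈ B ∨ ∃ j, i ∈ A j := by
  have : i ∈ (Finset.univ.biUnion A) ∪ B := by rw [hf.2.2.2.1]; exact mem_univ i
  rcases mem_union.mp this with h' | h'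
  · right; obtain ⟨j, _, hj⟩ := mem_biUnion.mp h'; exact ⟨j, hj⟩
  · left; exact h'

lemma frame_group_unique (hf : IsFrame r δ S A B ξ) {i : Fin t} {j1 j2 : Fin a}
    (h1 : i ∈ A j1) (h2 : i ∈ A j2) : j1 = j2 := by
  by_contra hne
  exact absurd h2 (Finset.disjoint_left.mp (hf.2.1 j1 j2 hne) h1)

lemma frame_notB (hf : IsFrame r δ S A B ξ) {i : Fin t} {j : Fin a}
    (h1 : i ∈ A j) : i ∉ B :=
  fun hB => absurd hB (Finset.disjoint_left.mp (hf.2.2.1 j) h1)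

lemma frame_xi_not (hf : IsFrame r δ S A B ξ) (hA : ∀ j, (A j).Nonempty) {j : Fin a}
    {i : Fin t} (hi : i ∉ A j) : ξ j ∉ S i := by
  obtain ⟨ℓ, hℓ⟩ := hA j
  have hx : ξ j ∈ (A j).biUnion S := mem_biUnion.mpr ⟨ℓ, hℓ, frame_ximem hf hℓ⟩
  rcases frame_mem_B_or hf i with hB' | ⟨j', hj'⟩
  · exact fun hmem =>
      (Finset.disjoint_left.mp (hf.2.2.2.2.2.2.2.1 j i hB') hx) hmem
  · have hne : j ≠ j' := fun h => hi (h ▸ hj')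
    intro hmem
    exact (Finset.disjoint_left.mp (hf.2.2.2.2.2.2.1 j j' hne) hx)
      (mem_biUnion.mpr ⟨i, hj', hmem⟩)

lemma frame_xi_mem_iff (hf : IsFrame r δ S A B ξ) (hA : ∀ j, (A j).Nonempty)
    {j j' : Fin a} {i : Fin t} (hi : i ∈ A j) : ξ j' ∈ S i ↔ j' = j := by
  constructor
  · intro h
    by_contra hne
    have : i ∉ A j' := fun h' => hne (frame_group_unique hf h' hi)
    exact frame_xi_not hf hA this h
  · rintro rfl; exact frame_ximem hf hi

lemma frame_xi_inj (hf : IsFrame r δ S A B ξ) (hA : ∀ j, (A j).Nonempty) :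
    Function.Injective ξ := by
  intro j1 j2 h
  by_contra hne
  obtain ⟨ℓ, hℓ⟩ := hA j1
  have h1 : ξ j1 ∈ S ℓ := frame_ximem hf hℓ
  have h2 : ξ j2 ∉ S ℓ := by
    rw [frame_xi_mem_iff hf hA hℓ]; exact fun h' => hne h'.symm
  exact h2 (h ▸ h1)

lemma Sp_not_img {i : Fin t} {x : Fin n} (hx : x ∈ Sp S ξ i) :
    x ∉ Finset.image ξ Finset.univ := (mem_sdiff.mp hx).2

lemma SpB (hf : IsFrame r δ S A B ξ) (hA : ∀ j, (A j).Nonempty) {i : Fin t}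
    (hi : i ∈ B) : Sp S ξ i = S i := by
  ext x
  simp only [Sp, mem_sdiff, Finset.mem_image, mem_univ, true_and]
  constructor
  · exact fun h => h.1
  · intro hx
    refine ⟨hx, ?_⟩
    rintro ⟨j, rfl⟩
    exact frame_xi_not hf hA (fun h => frame_notB hf h hi) hx

lemma SpA (hf : IsFrame r δ S A B ξ) (hA : ∀ j, (A j).Nonempty) {i : Fin t} {j : Fin a}
    (hi : i ∈ A j) : Sp S ξ i = S i \ {ξ j} := by
  ext x
  simp only [Sp, mem_sdiff, Finset.mem_image, mem_univ, true_and, mem_singleton]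
  constructor
  · rintro ⟨hx, h⟩
    exact ⟨hx, fun he => h ⟨j, he.symm⟩⟩
  · rintro ⟨hx, h⟩
    refine ⟨hx, ?_⟩
    rintro ⟨j', rfl⟩
    exact h (by rw [(frame_xi_mem_iff hf hA hi).mp hx])

lemma card_SpB (hf : IsFrame r δ S A B ξ) (hA : ∀ j, (A j).Nonempty) {i : Fin t}
    (hi : i ∈ B) : (Sp S ξ i).card = r + δ - 1 := by
  rw [SpB hf hA hi, hf.1 i]

lemma card_SpA (hf : IsFrame r δ S A B ξ) (hA : ∀ j, (A j).Nonempty) {i : Fin t}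
    {j : Fin a} (hi : i ∈ A j) : (Sp S ξ i).card = r + δ - 2 := by
  rw [SpA hf hA hi, card_sdiff_of_subset (singleton_subset_iff.mpr (frame_ximem hf hi)),
    hf.1 i, card_singleton]
  omega

lemma Sp_disj (hf : IsFrame r δ S A B ξ) (hA : ∀ j, (A j).Nonempty) {i1 i2 : Fin t}
    (hne : i1 ≠ i2) : Disjoint (Sp S ξ i1) (Sp S ξ i2) := by
  have hsub : ∀ i, Sp S ξ i ⊆ S i := fun i => sdiff_subset
  have hsubA : ∀ {i : Fin t} {j : Fin a}, i ∈ A j → Sp S ξ i ⊆ (A j).biUnion S :=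
    fun {i j} hij => (hsub i).trans (subset_biUnion_of_mem S hij)
  rcases frame_mem_B_or hf i1 with h1 | ⟨j1, h1⟩ <;> rcases frame_mem_B_or hf i2 with h2 | ⟨j2, h2⟩
  · exact (hf.2.2.2.2.2.2.2.2.1 i1 h1 i2 h2 hne).mono (hsub i1) (hsub i2)
  · exact ((hf.2.2.2.2.2.2.2.1 j2 i1 h1).symm).mono (hsub i1) (hsubA h2)
  · exact (hf.2.2.2.2.2.2.2.1 j1 i2 h2).mono (hsubA h1) (hsub i2)
  · rcases eq_or_ne j1 j2 with rfl | hj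
    · refine (hf.2.2.2.2.2.1 j1 i1 h1 i2 h2 hne).mono ?_ ?_
      · rw [SpA hf hA h1]
      · rw [SpA hf hA h2]
    · exact (hf.2.2.2.2.2.2.1 j1 j2 hj).mono (hsubA h1) (hsubA h2)

lemma Sp_disj_S (hf : IsFrame r δ S A B ξ) (hA : ∀ j, (A j).Nonempty) {i1 i2 : Fin t}
    (hne : i1 ≠ i2) : Disjoint (Sp S ξ i1) (S i2) := by
  rw [Finset.disjoint_left]
  intro x hx1 hx2
  have hx2' : x ∈ Sp S ξ i2 := mem_sdiff.mpr ⟨hx2, Sp_not_img hx1⟩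
  exact (Finset.disjoint_left.mp (Sp_disj hf hA hne) hx1) hx2'

lemma Sp_cover (hf : IsFrame r δ S A B ξ) (x : Fin n) :
    (∃ j, x = ξ j) ∨ ∃ i, x ∈ Sp S ξ i := by
  classical
  have : x ∈ Finset.univ.biUnion S := by rw [hf.2.2.2.2.2.2.2.2.2]; exact mem_univ x
  obtain ⟨i, _, hi⟩ := mem_biUnion.mp this
  by_cases hx : x ∈ Finset.image ξ Finset.univ
  · obtain ⟨j, _, hj⟩ := Finset.mem_image.mp hx
    exact Or.inl ⟨j, hj.symm⟩
  · exact Or.inr ⟨i, mem_sdiff.mpr ⟨hi, hx⟩⟩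

end Core14

section Core14b

variable {n t a r δ : ℕ} {S : Fin t → Finset (Fin n)}
  {A : Fin a → Finset (Fin t)} {B : Finset (Fin t)} {ξ : Fin a → Fin n}

/-- cores are downward closed (when all blocks are nonempty). -/
lemma core_shrink (hf : IsFrame r δ S A B ξ) (hA : ∀ j, (A j).Nonempty)
    {T' T'' : Finset (Fin n)} (hc : IsCore S A B ξ r T') (hsub : T'' ⊆ T') :
    IsCore S A B ξ r T'' := by
  obtain ⟨h1, h2, h3⟩ := hc
  have hmono : ∀ i : Fin t, (T'' ∩ S i).card ≤ (T' ∩ S i).card :=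
    fun i => card_le_card (inter_subset_inter hsub (Finset.Subset.refl _))
  refine ⟨?_, ?_, ?_⟩
  · intro j hj i hi
    exact le_trans (hmono i) (h1 j (hsub hj) i hi)
  · intro j hj
    by_cases hjT : ξ j ∈ T'
    · obtain ⟨d, hd⟩ := hA j
      have key : ∀ i ∈ A j, (T'' ∩ S i).card ≤ r - 1 := by
        intro i hi
        have hxi : ξ j ∈ T' ∩ S i := mem_inter.mpr ⟨hjT, frame_ximem hf hi⟩
        have hss : T'' ∩ S i ⊆ (T' ∩ S i).erase (ξ j) := by
          intro x hx
          refine mem_erase.mpr ⟨?_, inter_subset_inter hsub (Finset.Subset.refl _) hx⟩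
          rintro rfl; exact hj (mem_inter.mp hx).1
        calc (T'' ∩ S i).card ≤ ((T' ∩ S i).erase (ξ j)).card := card_le_card hss
          _ = (T' ∩ S i).card - 1 := card_erase_of_mem hxi
          _ ≤ r - 1 := by have := h1 j hjT i hi; omega
      exact ⟨d, hd, le_trans (key d hd) (Nat.sub_le r 1), fun i hi _ => key i hi⟩
    · obtain ⟨d, hd, hdr, hrest⟩ := h2 j hjT
      exact ⟨d, hd, le_trans (hmono d) hdr,
        fun i hi hne => le_trans (hmono i) (hrest i hi hne)⟩
  · intro i hi
    exact le_trans (hmono i) (h3 i hi)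

/-- assembling a core from pieces of the reduced sets plus selected `ξ j`'s. -/
lemma core_assemble (hf : IsFrame r δ S A B ξ) (hA : ∀ j, (A j).Nonempty)
    (hr1 : 1 ≤ r) (E : Fin t → Finset (Fin n)) (G : Finset (Fin a))
    (hE : ∀ i, E i ⊆ Sp S ξ i)
    (hEB : ∀ i ∈ B, (E i).card ≤ r)
    (hEG : ∀ j ∈ G, ∀ i ∈ A j, (E i).card ≤ r - 1)
    (hEG' : ∀ j ∉ G, ∃ d ∈ A j, (E d).card ≤ r ∧
      ∀ i ∈ A j, i ≠ d → (E i).card ≤ r - 1) :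
    IsCore S A B ξ r (Finset.univ.biUnion E ∪ G.image ξ) ∧
      (Finset.univ.biUnion E ∪ G.image ξ).card = (∑ i, (E i).card) + G.card := by
  classical
  set T' := Finset.univ.biUnion E ∪ G.image ξ with hT'
  have key1 : ∀ i0 : Fin t, (Finset.univ.biUnion E) ∩ S i0 ⊆ E i0 := by
    intro i0 x hx
    obtain ⟨hx1, hx2⟩ := mem_inter.mp hx
    obtain ⟨i, _, hxi⟩ := mem_biUnion.mp hx1
    rcases eq_or_ne i i0 with rfl | hne
    · exact hxi
    · exact absurd hx2 (Finset.disjoint_left.mp (Sp_disj_S hf hA hne) (hE i hxi))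
  have keyB : ∀ i0 ∈ B, T' ∩ S i0 ⊆ E i0 := by
    intro i0 hB0 x hx
    obtain ⟨hx1, hx2⟩ := mem_inter.mp hx
    rcases mem_union.mp hx1 with h | h
    · exact key1 i0 (mem_inter.mpr ⟨h, hx2⟩)
    · obtain ⟨j', _, rfl⟩ := Finset.mem_image.mp h
      exact absurd hx2 (frame_xi_not hf hA (fun hh => frame_notB hf hh hB0))
  have keyA : ∀ {i0 : Fin t} {j : Fin a}, i0 ∈ A j →
      T' ∩ S i0 ⊆ E i0 ∪ (if j ∈ G then {ξ j} else ∅) := by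
    intro i0 j hij x hx
    obtain ⟨hx1, hx2⟩ := mem_inter.mp hx
    rcases mem_union.mp hx1 with h | h
    · exact mem_union_left _ (key1 i0 (mem_inter.mpr ⟨h, hx2⟩))
    · obtain ⟨j', hj'G, rfl⟩ := Finset.mem_image.mp h
      have : j' = j := (frame_xi_mem_iff hf hA hij).mp hx2
      subst this
      refine mem_union_right _ ?_
      simp [hj'G]
  have hximem : ∀ j : Fin a, ξ j ∈ T' ↔ j ∈ G := by
    intro j
    constructor
    · intro h
      rcases mem_union.mp h with h | h
      · obtain ⟨i, _, hxi⟩ := mem_biUnion.mp h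
        exact absurd (Finset.mem_image.mpr ⟨j, mem_univ j, rfl⟩) (Sp_not_img (hE i hxi))
      · obtain ⟨j', hj', he⟩ := Finset.mem_image.mp h
        rwa [← frame_xi_inj hf hA he]
    · intro h
      exact mem_union_right _ (Finset.mem_image.mpr ⟨j, h, rfl⟩)
  constructor
  · refine ⟨?_, ?_, ?_⟩
    · intro j hj i hi
      have hjG : j ∈ G := (hximem j).mp hj
      calc (T' ∩ S i).card ≤ (E i ∪ (if j ∈ G then {ξ j} else ∅)).card :=
            card_le_card (keyA hi)
        _ ≤ (E i).card + (if j ∈ G then ({ξ j} : Finset (Fin n)) else ∅).card :=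
            card_union_le _ _
        _ ≤ (r - 1) + 1 := by
            refine Nat.add_le_add (hEG j hjG i hi) ?_
            split <;> simp
        _ ≤ r := by omega
    · intro j hj
      have hjG : j ∉ G := fun h => hj ((hximem j).mpr h)
      obtain ⟨d, hd, hdr, hrest⟩ := hEG' j hjG
      have hbound : ∀ i ∈ A j, (T' ∩ S i).card ≤ (E i).card := by
        intro i hi
        refine card_le_card ?_
        have := keyA hi
        simpa [hjG] using this
      exact ⟨d, hd, le_trans (hbound d hd) hdr,
        fun i hi hne => le_trans (hbound i hi) (hrest i hi hne)⟩
    · intro i hi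
      exact le_trans (card_le_card (keyB i hi)) (hEB i hi)
  · have hdisj : Disjoint (Finset.univ.biUnion E) (G.image ξ) := by
      rw [Finset.disjoint_left]
      intro x hx hx2
      obtain ⟨i, _, hxi⟩ := mem_biUnion.mp hx
      obtain ⟨j, _, rfl⟩ := Finset.mem_image.mp hx2
      exact (Sp_not_img (hE i hxi)) (Finset.mem_image.mpr ⟨j, mem_univ j, rfl⟩)
    rw [card_union_of_disjoint hdisj, card_biUnion
      (fun x _ y _ hxy => (Sp_disj hf hA hxy).mono (hE x) (hE y)),
      Finset.card_image_of_injective G (frame_xi_inj hf hA)]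

end Core14b

section Core14c

variable {n t a r δ : ℕ} {S : Fin t → Finset (Fin n)}
  {A : Fin a → Finset (Fin t)} {B : Finset (Fin t)} {ξ : Fin a → Fin n}

lemma core_count (hf : IsFrame r δ S A B ξ) (hA : ∀ j, (A j).Nonempty)
    (hr1 : 1 ≤ r) (hδ : 2 ≤ δ) (k m : ℕ)
    (J : Finset (Fin t)) (hJm : J.card = m)
    (hJS : k + m * (δ - 1) ≤ (J.biUnion S).card)
    (E : Fin t → Finset (Fin n)) (G : Finset (Fin a))
    (hB : ∀ i ∈ J ∩ B, r ≤ (E i).card)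
    (hGrp : ∀ j : Fin a, (J ∩ A j).Nonempty →
      (j ∈ G ∧ ∀ i ∈ J ∩ A j, r - 1 ≤ (E i).card) ∨
      (∃ d ∈ A j, r ≤ (E d).card ∧ ∀ i ∈ J ∩ A j, i ≠ d → r - 1 ≤ (E i).card)) :
    k ≤ (∑ i, (E i).card) + G.card := by
  classical
  set U := Finset.univ.filter (fun j : Fin a => (J ∩ A j).Nonempty) with hU
  have hsub : J.biUnion S ⊆ J.biUnion (Sp S ξ) ∪ U.image ξ := by
    intro x hx
    obtain ⟨i, hiJ, hxi⟩ := mem_biUnion.mp hx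
    by_cases hximg : x ∈ Finset.image ξ Finset.univ
    · obtain ⟨j', _, rfl⟩ := Finset.mem_image.mp hximg
      have hiA : i ∈ A j' := by
        by_contra h
        exact frame_xi_not hf hA h hxi
      refine mem_union_right _ (Finset.mem_image.mpr ⟨j', ?_, rfl⟩)
      exact mem_filter.mpr ⟨mem_univ _, ⟨i, mem_inter.mpr ⟨hiJ, hiA⟩⟩⟩
    · exact mem_union_left _ (mem_biUnion.mpr ⟨i, hiJ, mem_sdiff.mpr ⟨hxi, hximg⟩⟩)
  have h3 : (J.biUnion S).card ≤ (∑ i ∈ J, (Sp S ξ i).card) + U.card :=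
    calc (J.biUnion S).card ≤ (J.biUnion (Sp S ξ)).card + (U.image ξ).card :=
          le_trans (card_le_card hsub) (card_union_le _ _)
      _ ≤ (∑ i ∈ J, (Sp S ξ i).card) + U.card :=
          Nat.add_le_add card_biUnion_le card_image_le
  set Jb := J.filter (fun i => i ∈ B) with hJbdef
  have hJg : J.filter (fun i => ¬ (i ∈ B)) = U.biUnion (fun j => J ∩ A j) := by
    ext i
    simp only [mem_filter, mem_biUnion, mem_inter, hU, mem_univ, true_and]
    constructor
    · rintro ⟨hiJ, hiB⟩
      rcases frame_mem_B_or hf i with h | ⟨j, hj⟩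
      · exact absurd h hiB
      · exact ⟨j, ⟨i, mem_inter.mpr ⟨hiJ, hj⟩⟩, hiJ, hj⟩
    · rintro ⟨j, _, hiJ, hiA⟩
      exact ⟨hiJ, frame_notB hf hiA⟩
  have hPD : ∀ j1 ∈ U, ∀ j2 ∈ U, j1 ≠ j2 → Disjoint (J ∩ A j1) (J ∩ A j2) :=
    fun j1 _ j2 _ hne =>
      (hf.2.1 j1 j2 hne).mono inter_subset_right inter_subset_right
  have hPD' : Set.PairwiseDisjoint (↑U : Set (Fin a)) (fun j => J ∩ A j) :=
    fun j1 h1 j2 h2 hne => hPD j1 h1 j2 h2 hne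
  -- choose Q
  have hQex : ∀ j : Fin a, ∃ Q : Finset (Fin t), Q ⊆ A j ∧ ((J ∩ A j).Nonempty →
      (J ∩ A j).card * (r - 1) + 1 ≤ (∑ i ∈ Q, (E i).card) + (if j ∈ G then 1 else 0)) := by
    intro j
    by_cases hne : (J ∩ A j).Nonempty
    · rcases hGrp j hne with ⟨hjG, hall⟩ | ⟨d, hdA, hdr, hrest⟩
      · refine ⟨J ∩ A j, inter_subset_right, fun _ => ?_⟩
        have h1 : (J ∩ A j).card * (r-1) ≤ ∑ i ∈ J ∩ A j, (E i).card :=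
          calc (J ∩ A j).card * (r-1) = ∑ _i ∈ J ∩ A j, (r-1) := by
                rw [sum_const, smul_eq_mul]
            _ ≤ ∑ i ∈ J ∩ A j, (E i).card := Finset.sum_le_sum hall
        simp only [hjG, if_pos]
        omega
      · refine ⟨insert d (J ∩ A j), ?_, fun _ => ?_⟩
        · rw [Finset.insert_subset_iff]; exact ⟨hdA, inter_subset_right⟩
        · have hgen : ∀ s : Finset (Fin t), s.card * (r-1) ≤ ∑ i ∈ s, (if i ∈ (J ∩ A j) ∧ i ≠ d then 1 else 0) * 0 + ∑ i ∈ s, (E i).card → True := fun _ _ => trivial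
          by_cases hdJ : d ∈ J ∩ A j
          · rw [Finset.insert_eq_self.mpr hdJ]
            have h1 : ∑ i ∈ J ∩ A j, (E i).card
                = (E d).card + ∑ i ∈ (J ∩ A j).erase d, (E i).card :=
              (Finset.add_sum_erase _ _ hdJ).symm
            have h2 : ((J ∩ A j).card - 1) * (r-1)
                ≤ ∑ i ∈ (J ∩ A j).erase d, (E i).card := by
              rw [← card_erase_of_mem hdJ]
              calc ((J ∩ A j).erase d).card * (r-1)
                  = ∑ _i ∈ (J ∩ A j).erase d, (r-1) := by rw [sum_const, smul_eq_mul]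
                _ ≤ _ := Finset.sum_le_sum
                    (fun i hi => hrest i (mem_of_mem_erase hi) (ne_of_mem_erase hi))
            have key : (J ∩ A j).card * (r - 1) + 1
                ≤ r + ((J ∩ A j).card - 1) * (r - 1) := by
              have h4 : 1 ≤ (J ∩ A j).card := card_pos.mpr ⟨d, hdJ⟩
              obtain ⟨c', hc'⟩ : ∃ c', (J ∩ A j).card = c' + 1 :=
                ⟨(J ∩ A j).card - 1, by omega⟩
              rw [hc']
              simp only [Nat.add_sub_cancel]
              rw [show (c' + 1) * (r - 1) = c' * (r-1) + (r-1) from by ring]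
              generalize c' * (r-1) = X
              omega
            rw [h1]
            generalize hX : (J ∩ A j).card * (r - 1) = X at key
            generalize hY : ((J ∩ A j).card - 1) * (r - 1) = Y at key h2
            have := hdr
            split <;> omega
          · rw [Finset.sum_insert hdJ]
            have h2 : (J ∩ A j).card * (r-1) ≤ ∑ i ∈ (J ∩ A j), (E i).card :=
              calc (J ∩ A j).card * (r-1) = ∑ _i ∈ (J ∩ A j), (r-1) := by
                    rw [sum_const, smul_eq_mul]
                _ ≤ _ := Finset.sum_le_sum
                    (fun i hi => hrest i hi (fun h => hdJ (h ▸ hi)))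
            generalize (J ∩ A j).card * (r - 1) = X at h2 ⊢
            omega
    · exact ⟨∅, empty_subset _, fun h => absurd h hne⟩
  choose Q hQA hQineq using hQex
  have hPDQ : Set.PairwiseDisjoint (↑U : Set (Fin a)) Q :=
    fun j1 _ j2 _ hne => (hf.2.1 j1 j2 hne).mono (hQA j1) (hQA j2)
  have S2 : ∑ i ∈ Jb, (Sp S ξ i).card = Jb.card * (r + δ - 1) := by
    rw [Finset.sum_congr rfl (fun i hi => card_SpB hf hA (mem_filter.mp hi).2),
      sum_const, smul_eq_mul]
  have S3 : ∑ i ∈ J.filter (fun i => ¬ (i ∈ B)), (Sp S ξ i).card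
      = ∑ j ∈ U, (J ∩ A j).card * (r + δ - 2) := by
    rw [hJg, Finset.sum_biUnion hPD']
    refine Finset.sum_congr rfl (fun j _ => ?_)
    rw [Finset.sum_congr rfl (fun i hi => card_SpA hf hA (mem_inter.mp hi).2),
      sum_const, smul_eq_mul]
  have S1 : ∑ i ∈ J, (Sp S ξ i).card
      = Jb.card * (r + δ - 1) + ∑ j ∈ U, (J ∩ A j).card * (r + δ - 2) := by
    rw [← Finset.sum_filter_add_sum_filter_not J (fun i => i ∈ B)
      (fun i => (Sp S ξ i).card), S2, S3]
  have S4 : m = Jb.card + ∑ j ∈ U, (J ∩ A j).card := by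
    rw [← hJm, ← Finset.card_filter_add_card_filter_not (p := fun i => i ∈ B)]
    congr 1
    rw [hJg, card_biUnion hPD]
  have S5 : (∑ i ∈ Jb, (E i).card) + ∑ j ∈ U, ∑ i ∈ Q j, (E i).card
      ≤ ∑ i, (E i).card := by
    have hdisj2 : Disjoint Jb (U.biUnion Q) := by
      rw [Finset.disjoint_left]
      intro i hi hib
      obtain ⟨j, _, hij⟩ := mem_biUnion.mp hib
      exact frame_notB hf (hQA j hij) (mem_filter.mp hi).2
    calc (∑ i ∈ Jb, (E i).card) + ∑ j ∈ U, ∑ i ∈ Q j, (E i).card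
        = ∑ i ∈ Jb ∪ U.biUnion Q, (E i).card := by
          rw [Finset.sum_union hdisj2, Finset.sum_biUnion hPDQ]
      _ ≤ ∑ i, (E i).card := Finset.sum_le_sum_of_subset (subset_univ _)
  have S6 : Jb.card * r ≤ ∑ i ∈ Jb, (E i).card :=
    calc Jb.card * r = ∑ _i ∈ Jb, r := by rw [sum_const, smul_eq_mul]
      _ ≤ _ := Finset.sum_le_sum (fun i hi => hB i
          (mem_inter.mpr ⟨(mem_filter.mp hi).1, (mem_filter.mp hi).2⟩))
  have S7 : ∑ j ∈ U, ((J ∩ A j).card * (r-1) + 1)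
      ≤ (∑ j ∈ U, ∑ i ∈ Q j, (E i).card) + G.card := by
    calc ∑ j ∈ U, ((J ∩ A j).card * (r-1) + 1)
        ≤ ∑ j ∈ U, ((∑ i ∈ Q j, (E i).card) + (if j ∈ G then 1 else 0)) :=
          Finset.sum_le_sum (fun j hj => hQineq j (mem_filter.mp hj).2)
      _ = (∑ j ∈ U, ∑ i ∈ Q j, (E i).card) + ∑ j ∈ U, (if j ∈ G then 1 else 0) :=
          Finset.sum_add_distrib
      _ ≤ _ := by
          refine Nat.add_le_add_left ?_ _
          calc ∑ j ∈ U, (if j ∈ G then 1 else 0)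
              = ∑ j ∈ U.filter (fun j => j ∈ G), 1 := (Finset.sum_filter _ _).symm
            _ = (U.filter (fun j => j ∈ G)).card := by rw [Finset.sum_const, smul_eq_mul, Nat.mul_one]
            _ ≤ G.card := card_le_card (fun j hj => (mem_filter.mp hj).2)
  have emid : (∑ i ∈ J, (Sp S ξ i).card) + U.card
      = (Jb.card * r + (∑ j ∈ U, ((J ∩ A j).card * (r-1) + 1)))
        + (Jb.card + ∑ j ∈ U, (J ∩ A j).card) * (δ - 1) := by
    have D1 : Jb.card * (r + δ - 1) = Jb.card * r + Jb.card * (δ - 1) := by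
      rw [show r + δ - 1 = r + (δ - 1) by omega, Nat.mul_add]
    have e2 : ∑ j ∈ U, (J ∩ A j).card * (r + δ - 2)
        = ∑ j ∈ U, (J ∩ A j).card * (r-1) + ∑ j ∈ U, (J ∩ A j).card * (δ-1) := by
      rw [← Finset.sum_add_distrib]
      exact Finset.sum_congr rfl (fun j _ => by
        rw [show r + δ - 2 = (r-1) + (δ-1) by omega, Nat.mul_add])
    have e3 : ∑ j ∈ U, ((J ∩ A j).card * (r-1) + 1)
        = (∑ j ∈ U, (J ∩ A j).card * (r-1)) + U.card := by
      rw [Finset.sum_add_distrib]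
      simp
    have e4 : (Jb.card + ∑ j ∈ U, (J ∩ A j).card) * (δ-1)
        = Jb.card * (δ-1) + (∑ j ∈ U, (J ∩ A j).card) * (δ-1) := Nat.add_mul _ _ _
    have e5 : (∑ j ∈ U, (J ∩ A j).card) * (δ-1)
        = ∑ j ∈ U, (J ∩ A j).card * (δ-1) := Finset.sum_mul _ _ _
    rw [S1, D1, e2, e3, e4, e5]
    ring
  have main : k + m * (δ - 1) ≤ ((∑ i, (E i).card) + G.card) + m * (δ - 1) :=
    calc k + m * (δ - 1) ≤ (J.biUnion S).card := hJS
      _ ≤ (∑ i ∈ J, (Sp S ξ i).card) + U.card := h3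
      _ = (Jb.card * r + (∑ j ∈ U, ((J ∩ A j).card * (r-1) + 1)))
          + (Jb.card + ∑ j ∈ U, (J ∩ A j).card) * (δ - 1) := emid
      _ = (Jb.card * r + (∑ j ∈ U, ((J ∩ A j).card * (r-1) + 1))) + m * (δ-1) := by
          rw [← S4]
      _ ≤ ((∑ i ∈ Jb, (E i).card) + ((∑ j ∈ U, ∑ i ∈ Q j, (E i).card) + G.card))
          + m * (δ-1) := Nat.add_le_add_right (Nat.add_le_add S6 S7) _
      _ ≤ ((∑ i, (E i).card) + G.card) + m * (δ-1) := by
          refine Nat.add_le_add_right ?_ _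
          generalize h5 : (∑ i ∈ Jb, (E i).card) = X at S5
          omega
  exact Nat.le_of_add_le_add_right main

end Core14c

section Core14d

variable {n t a r δ : ℕ} {S : Fin t → Finset (Fin n)}
  {A : Fin a → Finset (Fin t)} {B : Finset (Fin t)} {ξ : Fin a → Fin n}

lemma core_part1 {k m : ℕ} (hf : IsFrame r δ S A B ξ) (hA : ∀ j, (A j).Nonempty)
    (hr1 : 1 ≤ r) (hδ : 2 ≤ δ) (hm1 : 1 ≤ m)
    (hJ : ∀ J : Finset (Fin t), J.card = m → k + m * (δ - 1) ≤ (J.biUnion S).card)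
    (T : Finset (Fin n)) (hT : k + (m - 1) * (δ - 1) ≤ T.card) :
    ∃ T', T' ⊆ T ∧ IsCore S A B ξ r T' ∧ k ≤ T'.card := by
  classical
  set G : Finset (Fin a) := Finset.univ.filter (fun j => ξ j ∈ T) with hG
  have hdsg : ∀ j : Fin a, ∃ d : Fin t, d ∈ A j ∧
      ((∃ i ∈ A j, r ≤ (T ∩ Sp S ξ i).card) → r ≤ (T ∩ Sp S ξ d).card) := by
    intro j
    by_cases h : ∃ i ∈ A j, r ≤ (T ∩ Sp S ξ i).card
    · obtain ⟨d, hd1, hd2⟩ := h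
      exact ⟨d, hd1, fun _ => hd2⟩
    · exact ⟨(hA j).choose, (hA j).choose_spec, fun h' => absurd h' h⟩
  choose dsg hdsgA hdsgR using hdsg
  set c : Fin t → ℕ := fun i =>
    if i ∈ B then r
    else if ∃ j, i ∈ A j ∧ j ∉ G ∧ i = dsg j then r else r - 1 with hc
  set E : Fin t → Finset (Fin n) := fun i => trunc (T ∩ Sp S ξ i) (c i) with hE
  have hcr : ∀ i, c i ≤ r := by
    intro i; rw [hc]
    dsimp only
    split
    · exact le_refl r
    · split
      · exact le_refl r
      · omega
  have hcr1 : ∀ i, r - 1 ≤ c i := by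
    intro i; rw [hc]
    dsimp only
    split
    · omega
    · split
      · omega
      · exact le_refl _
  have hEsub : ∀ i, E i ⊆ T ∩ Sp S ξ i := fun i => trunc_subset _ _
  have hEcard : ∀ i, (E i).card = min (T ∩ Sp S ξ i).card (c i) := fun i => trunc_card _ _
  have hcB : ∀ i ∈ B, c i = r := by
    intro i hi; rw [hc]; dsimp only; rw [if_pos hi]
  have hcA : ∀ {j}, j ∈ G → ∀ i ∈ A j, c i = r - 1 := by
    intro j hj i hi
    rw [hc]; dsimp only
    rw [if_neg (frame_notB hf hi), if_neg]
    rintro ⟨j', hij', hj'G, _⟩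
    exact hj'G (frame_group_unique hf hij' hi ▸ hj)
  have hcdsg : ∀ {j}, j ∉ G → c (dsg j) = r := by
    intro j hj
    rw [hc]; dsimp only
    rw [if_neg (frame_notB hf (hdsgA j)), if_pos ⟨j, hdsgA j, hj, rfl⟩]
  have hcA' : ∀ {j}, j ∉ G → ∀ i ∈ A j, i ≠ dsg j → c i = r - 1 := by
    intro j hj i hi hne
    rw [hc]; dsimp only
    rw [if_neg (frame_notB hf hi), if_neg]
    rintro ⟨j', hij', _, hd⟩
    exact hne ((frame_group_unique hf hij' hi) ▸ hd)
  obtain ⟨hcore, hcardeq⟩ := core_assemble hf hA hr1 E G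
    (fun i => (hEsub i).trans inter_subset_right)
    (fun i hi => by rw [hEcard i, hcB i hi]; exact Nat.min_le_right _ _)
    (fun j hj i hi => by rw [hEcard i, hcA hj i hi]; exact Nat.min_le_right _ _)
    (fun j hj => ⟨dsg j, hdsgA j,
      by rw [hEcard _, hcdsg hj]; exact Nat.min_le_right _ _,
      fun i hi hne => by rw [hEcard i, hcA' hj i hi hne]; exact Nat.min_le_right _ _⟩)
  refine ⟨Finset.univ.biUnion E ∪ G.image ξ, ?_, hcore, ?_⟩
  · intro x hx
    rcases mem_union.mp hx with h | h
    · obtain ⟨i, _, hxi⟩ := mem_biUnion.mp h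
      exact (mem_inter.mp (hEsub i hxi)).1
    · obtain ⟨j, hjG, rfl⟩ := Finset.mem_image.mp h
      exact (mem_filter.mp hjG).2
  rw [hcardeq]
  -- counting
  set D := Finset.univ.filter (fun i => c i < (T ∩ Sp S ξ i).card) with hD
  by_cases hDle : D.card ≤ m - 1
  · -- few saturated slots
    have hTsub : T ⊆ (Finset.univ.biUnion (fun i => T ∩ Sp S ξ i)) ∪ G.image ξ := by
      intro x hx
      rcases Sp_cover hf x with ⟨j, rfl⟩ | ⟨i, hxi⟩
      · exact mem_union_right _
          (Finset.mem_image.mpr ⟨j, mem_filter.mpr ⟨mem_univ _, hx⟩, rfl⟩)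
      · exact mem_union_left _
          (mem_biUnion.mpr ⟨i, mem_univ _, mem_inter.mpr ⟨hx, hxi⟩⟩)
    have hT2 : T.card ≤ (∑ i, (T ∩ Sp S ξ i).card) + G.card :=
      le_trans (card_le_card hTsub)
        (le_trans (card_union_le _ _) (Nat.add_le_add card_biUnion_le card_image_le))
    have hperslot : ∀ i, (T ∩ Sp S ξ i).card ≤ (E i).card + (if i ∈ D then δ - 1 else 0) := by
      intro i
      rw [hEcard i]
      by_cases hiD : i ∈ D
      · rw [if_pos hiD]
        have h1 : c i < (T ∩ Sp S ξ i).card := (mem_filter.mp hiD).2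
        have h2 : (T ∩ Sp S ξ i).card ≤ c i + (δ - 1) := by
          rcases frame_mem_B_or hf i with hiB | ⟨j, hij⟩
          · have h3 : (T ∩ Sp S ξ i).card ≤ r + δ - 1 :=
              le_trans (card_le_card inter_subset_right) (le_of_eq (card_SpB hf hA hiB))
            rw [hcB i hiB]; omega
          · have h3 : (T ∩ Sp S ξ i).card ≤ r + δ - 2 :=
              le_trans (card_le_card inter_subset_right) (le_of_eq (card_SpA hf hA hij))
            have h4 := hcr1 i
            omega
        omega
      · rw [if_neg hiD]
        have h1 : ¬ (c i < (T ∩ Sp S ξ i).card) :=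
          fun h => hiD (mem_filter.mpr ⟨mem_univ _, h⟩)
        omega
    have hsum : (∑ i, (T ∩ Sp S ξ i).card) ≤ (∑ i, (E i).card) + D.card * (δ - 1) := by
      calc (∑ i, (T ∩ Sp S ξ i).card)
          ≤ ∑ i, ((E i).card + (if i ∈ D then δ - 1 else 0)) :=
            Finset.sum_le_sum (fun i _ => hperslot i)
        _ = (∑ i, (E i).card) + ∑ i, (if i ∈ D then δ - 1 else 0) :=
            Finset.sum_add_distrib
        _ = (∑ i, (E i).card) + D.card * (δ - 1) := by
            congr 1
            rw [← Finset.sum_filter, Finset.filter_mem_eq_inter, Finset.univ_inter,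
              Finset.sum_const, smul_eq_mul]
    have hmul : D.card * (δ - 1) ≤ (m - 1) * (δ - 1) := Nat.mul_le_mul_right _ hDle
    generalize h1 : D.card * (δ - 1) = P at hsum hmul
    generalize h2 : (m - 1) * (δ - 1) = Q at hmul hT
    omega
  · -- many saturated slots: use hJ
    push_neg at hDle
    have hmD : m ≤ D.card := by omega
    obtain ⟨J, hJD, hJcard⟩ := Finset.exists_subset_card_eq hmD
    refine core_count hf hA hr1 hδ k m J hJcard (hJ J hJcard) E G ?_ ?_
    · intro i hi
      obtain ⟨hiJ, hiB⟩ := mem_inter.mp hi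
      have hiD : c i < (T ∩ Sp S ξ i).card := (mem_filter.mp (hJD hiJ)).2
      rw [hEcard i, hcB i hiB]
      rw [hcB i hiB] at hiD
      omega
    · intro j hne
      obtain ⟨i1, hi1⟩ := hne
      obtain ⟨hi1J, hi1A⟩ := mem_inter.mp hi1
      have hi1D : c i1 < (T ∩ Sp S ξ i1).card := (mem_filter.mp (hJD hi1J)).2
      have hi1r : r ≤ (T ∩ Sp S ξ i1).card := by
        have := hcr1 i1
        have h3 : (T ∩ Sp S ξ i1).card ≤ r + δ - 2 :=
          le_trans (card_le_card inter_subset_right) (le_of_eq (card_SpA hf hA hi1A))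
        omega
      by_cases hjG : j ∈ G
      · left
        refine ⟨hjG, fun i hi => ?_⟩
        obtain ⟨hiJ, hiA⟩ := mem_inter.mp hi
        have hiD : c i < (T ∩ Sp S ξ i).card := (mem_filter.mp (hJD hiJ)).2
        rw [hEcard i, hcA hjG i hiA]
        rw [hcA hjG i hiA] at hiD
        omega
      · right
        refine ⟨dsg j, hdsgA j, ?_, ?_⟩
        · have hda : r ≤ (T ∩ Sp S ξ (dsg j)).card := hdsgR j ⟨i1, hi1A, hi1r⟩
          rw [hEcard _, hcdsg hjG]
          omega
        · intro i hi hne'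
          obtain ⟨hiJ, hiA⟩ := mem_inter.mp hi
          have hiD : c i < (T ∩ Sp S ξ i).card := (mem_filter.mp (hJD hiJ)).2
          rw [hEcard i, hcA' hjG i hiA hne']
          rw [hcA' hjG i hiA hne'] at hiD
          omega

end Core14d

section Core14e

variable {n t a r δ : ℕ} {S : Fin t → Finset (Fin n)}
  {A : Fin a → Finset (Fin t)} {B : Finset (Fin t)} {ξ : Fin a → Fin n}

lemma core_part2 {k m : ℕ} (hf : IsFrame r δ S A B ξ) (hA : ∀ j, (A j).Nonempty)
    (hr1 : 1 ≤ r) (hδ : 2 ≤ δ) (hm1 : 1 ≤ m) (htm : m ≤ t)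
    (hJ : ∀ J : Finset (Fin t), J.card = m → k + m * (δ - 1) ≤ (J.biUnion S).card)
    (i0 : Fin t) (I : Finset (Fin n)) (hIsub : I ⊆ S i0) (hIcard : I.card = r) :
    ∃ T', IsCore S A B ξ r T' ∧ k ≤ T'.card ∧ I ⊆ T' := by
  classical
  obtain ⟨J, hJsup, hJcard⟩ := Finset.exists_superset_card_eq
    (s := ({i0} : Finset (Fin t))) (n := m) (by simpa using hm1)
    (by simpa [Fintype.card_fin] using htm)
  have hi0J : i0 ∈ J := hJsup (mem_singleton_self i0)
  set U : Finset (Fin a) := Finset.univ.filter (fun j => (J ∩ A j).Nonempty) with hU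
  set Edef : Fin t → Finset (Fin n) := fun i =>
    if i ∈ J then (if i ∈ B then trunc (Sp S ξ i) r else trunc (Sp S ξ i) (r-1))
    else ∅ with hEdef
  have hEdef_sub : ∀ i, Edef i ⊆ Sp S ξ i := by
    intro i; rw [hEdef]; dsimp only
    split
    · split <;> exact trunc_subset _ _
    · exact empty_subset _
  have hEdef_cardB : ∀ i ∈ J, i ∈ B → (Edef i).card = r := by
    intro i hiJ hiB
    rw [hEdef]; dsimp only
    rw [if_pos hiJ, if_pos hiB, trunc_card, card_SpB hf hA hiB]
    omega
  have hEdef_cardA : ∀ i ∈ J, ∀ j, i ∈ A j → (Edef i).card = r - 1 := by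
    intro i hiJ j hiA
    rw [hEdef]; dsimp only
    rw [if_pos hiJ, if_neg (frame_notB hf hiA), trunc_card, card_SpA hf hA hiA]
    omega
  have hEdef_le : ∀ i, (Edef i).card ≤ r := by
    intro i
    rw [hEdef]; dsimp only
    split
    · split
      · rw [trunc_card]; exact Nat.min_le_right _ _
      · rw [trunc_card]; exact le_trans (Nat.min_le_right _ _) (by omega)
    · simp
  have hEdef_leA : ∀ i, ∀ j, i ∈ A j → (Edef i).card ≤ r - 1 := by
    intro i j hiA
    rw [hEdef]; dsimp only
    split
    · rw [if_neg (frame_notB hf hiA), trunc_card]; exact Nat.min_le_right _ _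
    · simp
  have hUmem : ∀ {j : Fin a}, j ∈ U ↔ (J ∩ A j).Nonempty := by
    intro j; rw [hU, mem_filter]; simp
  rcases frame_mem_B_or hf i0 with hi0B | ⟨j0, hi0A⟩
  · -- case i0 ∈ B
    set F : Fin t → Finset (Fin n) := fun i => if i = i0 then I else Edef i with hF
    have hne_i0 : ∀ {i : Fin t} {j : Fin a}, i ∈ A j → i ≠ i0 :=
      fun {i j} hiA h => frame_notB hf hiA (h ▸ hi0B)
    have hFA : ∀ {i : Fin t} {j : Fin a}, i ∈ A j → F i = Edef i := by
      intro i j hiA; rw [hF]; dsimp only; rw [if_neg (hne_i0 hiA)]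
    obtain ⟨hcore, hcardeq⟩ := core_assemble hf hA hr1 F U
      (by
        intro i
        rw [hF]; dsimp only
        rcases eq_or_ne i i0 with rfl | hne
        · rw [if_pos rfl, SpB hf hA hi0B]; exact hIsub
        · rw [if_neg hne]; exact hEdef_sub i)
      (by
        intro i hiB
        rw [hF]; dsimp only
        rcases eq_or_ne i i0 with rfl | hne
        · rw [if_pos rfl, hIcard]
        · rw [if_neg hne]; exact hEdef_le i)
      (by
        intro j _ i hiA
        rw [hFA hiA]; exact hEdef_leA i j hiA)
      (by
        intro j hj
        obtain ⟨d, hd⟩ := hA j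
        exact ⟨d, hd, by rw [hFA hd]; exact hEdef_le d,
          fun i hiA _ => by rw [hFA hiA]; exact hEdef_leA i j hiA⟩)
    refine ⟨_, hcore, ?_, ?_⟩
    · rw [hcardeq]
      refine core_count hf hA hr1 hδ k m J hJcard (hJ J hJcard) F U ?_ ?_
      · intro i hi
        obtain ⟨hiJ, hiB⟩ := mem_inter.mp hi
        rw [hF]; dsimp only
        rcases eq_or_ne i i0 with rfl | hne
        · rw [if_pos rfl, hIcard]
        · rw [if_neg hne, hEdef_cardB i hiJ hiB]
      · intro j hne
        left
        refine ⟨hUmem.mpr hne, fun i hi => ?_⟩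
        obtain ⟨hiJ, hiA⟩ := mem_inter.mp hi
        rw [hFA hiA, hEdef_cardA i hiJ j hiA]
    · intro x hx
      refine mem_union_left _ (mem_biUnion.mpr ⟨i0, mem_univ _, ?_⟩)
      rw [hF]; dsimp only; rw [if_pos rfl]; exact hx
  · -- case i0 ∈ A j0
    have hj0U : j0 ∈ U := hUmem.mpr ⟨i0, mem_inter.mpr ⟨hi0J, hi0A⟩⟩
    have hxi_iff : ∀ {x : Fin n}, x ∈ I → x ∈ Finset.image ξ Finset.univ → x = ξ j0 := by
      intro x hxI hximg
      obtain ⟨j', _, rfl⟩ := Finset.mem_image.mp hximg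
      rw [(frame_xi_mem_iff hf hA hi0A).mp (hIsub hxI)]
    by_cases hxI : ξ j0 ∈ I
    · -- include mode
      set F : Fin t → Finset (Fin n) :=
        fun i => if i = i0 then I.erase (ξ j0) else Edef i with hF
      have hFne : ∀ {i : Fin t}, i ≠ i0 → F i = Edef i := by
        intro i hne; rw [hF]; dsimp only; rw [if_neg hne]
      have hFcard : (F i0).card = r - 1 := by
        rw [hF]; dsimp only
        rw [if_pos rfl, card_erase_of_mem hxI, hIcard]
      obtain ⟨hcore, hcardeq⟩ := core_assemble hf hA hr1 F U
        (by
          intro i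
          rw [hF]; dsimp only
          rcases eq_or_ne i i0 with rfl | hne
          · rw [if_pos rfl, SpA hf hA hi0A]
            intro x hx
            exact mem_sdiff.mpr ⟨hIsub (mem_of_mem_erase hx),
              by simpa using (mem_erase.mp hx).1⟩
          · rw [if_neg hne]; exact hEdef_sub i)
        (by
          intro i hiB
          have hne : i ≠ i0 := fun h => frame_notB hf hi0A (h ▸ hiB)
          rw [hFne hne]; exact hEdef_le i)
        (by
          intro j _ i hiA
          rcases eq_or_ne i i0 with rfl | hne
          · rw [hFcard]
          · rw [hFne hne]; exact hEdef_leA i j hiA)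
        (by
          intro j hj
          have hjne : j ≠ j0 := fun h => hj (h ▸ hj0U)
          obtain ⟨d, hd⟩ := hA j
          have hdni : ∀ {i : Fin t}, i ∈ A j → i ≠ i0 :=
            fun {i} hiA h => hjne (frame_group_unique hf (h ▸ hiA) hi0A)
          exact ⟨d, hd, by rw [hFne (hdni hd)]; exact hEdef_le d,
            fun i hiA _ => by rw [hFne (hdni hiA)]; exact hEdef_leA i j hiA⟩)
      refine ⟨_, hcore, ?_, ?_⟩
      · rw [hcardeq]
        refine core_count hf hA hr1 hδ k m J hJcard (hJ J hJcard) F U ?_ ?_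
        · intro i hi
          obtain ⟨hiJ, hiB⟩ := mem_inter.mp hi
          have hne : i ≠ i0 := fun h => frame_notB hf hi0A (h ▸ hiB)
          rw [hFne hne, hEdef_cardB i hiJ hiB]
        · intro j hne
          left
          refine ⟨hUmem.mpr hne, fun i hi => ?_⟩
          obtain ⟨hiJ, hiA⟩ := mem_inter.mp hi
          rcases eq_or_ne i i0 with rfl | hne'
          · rw [hFcard]
          · rw [hFne hne', hEdef_cardA i hiJ j hiA]
      · intro x hx
        by_cases hxx : x = ξ j0
        · subst hxx
          exact mem_union_right _ (Finset.mem_image.mpr ⟨j0, hj0U, rfl⟩)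
        · refine mem_union_left _ (mem_biUnion.mpr ⟨i0, mem_univ _, ?_⟩)
          rw [hF]; dsimp only; rw [if_pos rfl]
          exact mem_erase.mpr ⟨hxx, hx⟩
    · -- exclude mode
      set F : Fin t → Finset (Fin n) := fun i => if i = i0 then I else Edef i with hF
      set G : Finset (Fin a) := U.erase j0 with hG
      have hFne : ∀ {i : Fin t}, i ≠ i0 → F i = Edef i := by
        intro i hne; rw [hF]; dsimp only; rw [if_neg hne]
      have hFcard : (F i0).card = r := by
        rw [hF]; dsimp only; rw [if_pos rfl, hIcard]
      have hne_of_A : ∀ {i : Fin t} {j : Fin a}, j ≠ j0 → i ∈ A j → i ≠ i0 :=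
        fun {i j} hjne hiA h => hjne (frame_group_unique hf (h ▸ hiA) hi0A)
      obtain ⟨hcore, hcardeq⟩ := core_assemble hf hA hr1 F G
        (by
          intro i
          rw [hF]; dsimp only
          rcases eq_or_ne i i0 with rfl | hne
          · rw [if_pos rfl, SpA hf hA hi0A]
            intro x hx
            exact mem_sdiff.mpr ⟨hIsub hx, by
              simp only [mem_singleton]
              rintro rfl
              exact hxI hx⟩
          · rw [if_neg hne]; exact hEdef_sub i)
        (by
          intro i hiB
          have hne : i ≠ i0 := fun h => frame_notB hf hi0A (h ▸ hiB)
          rw [hFne hne]; exact hEdef_le i)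
        (by
          intro j hj i hiA
          have hjne : j ≠ j0 := (mem_erase.mp hj).1
          rw [hFne (hne_of_A hjne hiA)]
          exact hEdef_leA i j hiA)
        (by
          intro j hj
          rcases eq_or_ne j j0 with rfl | hjne
          · refine ⟨i0, hi0A, by rw [hFcard], fun i hiA hne => ?_⟩
            rw [hFne hne]; exact hEdef_leA i j hiA
          · have hjU : j ∉ U := fun h => hj (mem_erase.mpr ⟨hjne, h⟩)
            obtain ⟨d, hd⟩ := hA j
            exact ⟨d, hd, by rw [hFne (hne_of_A hjne hd)]; exact hEdef_le d,
              fun i hiA _ => by rw [hFne (hne_of_A hjne hiA)]; exact hEdef_leA i j hiA⟩)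
      refine ⟨_, hcore, ?_, ?_⟩
      · rw [hcardeq]
        refine core_count hf hA hr1 hδ k m J hJcard (hJ J hJcard) F G ?_ ?_
        · intro i hi
          obtain ⟨hiJ, hiB⟩ := mem_inter.mp hi
          have hne : i ≠ i0 := fun h => frame_notB hf hi0A (h ▸ hiB)
          rw [hFne hne, hEdef_cardB i hiJ hiB]
        · intro j hne
          rcases eq_or_ne j j0 with rfl | hjne
          · right
            refine ⟨i0, hi0A, by rw [hFcard], fun i hi hne' => ?_⟩
            obtain ⟨hiJ, hiA⟩ := mem_inter.mp hi
            rw [hFne hne', hEdef_cardA i hiJ j hiA]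
          · left
            refine ⟨mem_erase.mpr ⟨hjne, hUmem.mpr hne⟩, fun i hi => ?_⟩
            obtain ⟨hiJ, hiA⟩ := mem_inter.mp hi
            rw [hFne (hne_of_A hjne hiA), hEdef_cardA i hiJ j hiA]
      · intro x hx
        refine mem_union_left _ (mem_biUnion.mpr ⟨i0, mem_univ _, ?_⟩)
        rw [hF]; dsimp only; rw [if_pos rfl]; exact hx

end Core14e

/-- Lemma `core-form`: let `S = {S_1,…,S_t}` be an `(A,Ψ)`-frame over `[n]`
with `t ≥ ⌈k/r⌉` and `|∪_{i∈J} S_i| ≥ k + ⌈k/r⌉(δ-1)` for every `J ⊆ [t]` of size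
`⌈k/r⌉`. Then (1) every `T ⊆ [n]` with `|T| ≥ k + (⌈k/r⌉-1)(δ-1)` contains an
`(S,r,k)`-core, and (2) for every `i ∈ [t]` and every `r`-subset `I ⊆ S_i` there is an
`(S,r,k)`-core containing `I`. -/
theorem statement14 {n t a k r δ : ℕ} (hr1 : 1 ≤ r) (hδ : 2 ≤ δ) (hk1 : 1 ≤ k)
    (hrk : r ≤ k)
    (S : Fin t → Finset (Fin n)) (A : Fin a → Finset (Fin t)) (B : Finset (Fin t))
    (ξ : Fin a → Fin n) (hframe : IsFrame r δ S A B ξ)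
    (ht : (k + r - 1) / r ≤ t)
    (hJ : ∀ J : Finset (Fin t), J.card = (k + r - 1) / r →
      k + ((k + r - 1) / r) * (δ - 1) ≤ (J.biUnion S).card) :
    (∀ T : Finset (Fin n), k + ((k + r - 1) / r - 1) * (δ - 1) ≤ T.card →
      ∃ T' ⊆ T, IsCore S A B ξ r T' ∧ T'.card = k) ∧
    (∀ i : Fin t, ∀ I ⊆ S i, I.card = r →
      ∃ T' : Finset (Fin n), IsCore S A B ξ r T' ∧ T'.card = k ∧ I ⊆ T') := by
  classical
  set m := (k + r - 1) / r with hm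
  have hm1 : 1 ≤ m := by
    rw [hm, Nat.le_div_iff_mul_le hr1]
    omega
  by_cases hA : ∀ j, (A j).Nonempty
  · constructor
    · intro T hT
      obtain ⟨T', hT'sub, hcore, hk⟩ :=
        core_part1 hframe hA hr1 hδ hm1 hJ T hT
      obtain ⟨T'', hT''sub, hT''card⟩ := Finset.exists_subset_card_eq hk
      exact ⟨T'', hT''sub.trans hT'sub,
        core_shrink hframe hA hcore hT''sub, hT''card⟩
    · intro i0 I hIsub hIcard
      obtain ⟨T', hcore, hk, hIT⟩ :=
        core_part2 hframe hA hr1 hδ hm1 ht hJ i0 I hIsub hIcard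
      obtain ⟨T'', hIT'', hT''sub, hT''card⟩ :=
        Finset.exists_subsuperset_card_eq hIT (by rw [hIcard]; exact hrk) hk
      exact ⟨T'', core_shrink hframe hA hcore hT''sub, hT''card, hIT''⟩
  · exfalso
    push_neg at hA
    obtain ⟨j0, hj0⟩ := hA
    have hall : ∀ x : Fin n, x = ξ j0 := by
      intro x
      refine (hframe.2.2.2.2.1 j0 x).mp ?_
      intro ℓ hℓ
      simp [hj0] at hℓ
    have hn1 : (Finset.univ : Finset (Fin n)).card ≤ 1 :=
      calc (Finset.univ : Finset (Fin n)).card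
          ≤ ({ξ j0} : Finset (Fin n)).card := Finset.card_le_card
            (fun x _ => by rw [hall x]; exact Finset.mem_singleton_self _)
        _ = 1 := Finset.card_singleton _
    obtain ⟨J, _, hJcard⟩ := Finset.exists_subset_card_eq
      (show m ≤ (Finset.univ : Finset (Fin t)).card by
        rw [Finset.card_univ, Fintype.card_fin]; exact ht)
    have h1 := hJ J hJcard
    have h2 : (J.biUnion S).card ≤ 1 :=
      le_trans (Finset.card_le_card (Finset.subset_univ _)) hn1
    have h3 : 1 * 1 ≤ m * (δ - 1) := Nat.mul_le_mul hm1 (by omega)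
    generalize m * (δ - 1) = M at h1 h3
    omega
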